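/- Suppose for each p in a finite index set P we have reals N(p), a(p), b(p) ≥ 0 and ratios r(p), s(p) ∈ [0,1] such that (1−η)^α·a(p) ≤ N(p) ≤ (1+η)^α·a(p) and |r(p) − s(p)| < γ, where a(p)·r(p) = b(p), Σ_p b(p) = T, and Σ_p a(p) ≤ M·T for some M with γ·M ≤ η. Then (1−η)^{α+1}·T ≤ Σ_p N(p)·s(p) ≤ (1+η)^{α+1}·T. -/
import Mathlib


/-- Abstract form of the layer estimate: if each `N p` is a `(1±η)^α`-approximation of
`a p`, each estimated ratio `s p` is within `γ` of the true ratio `r p = b p / a p`,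
`Σ b p = T`, `Σ a p ≤ M·T` and `γ·M ≤ η`, then `Σ N p · s p` is a
`(1±η)^(α+1)`-approximation of `T`. -/
theorem stmt_16 {P : Type*} [Fintype P] (N a b r s : P → ℝ) (η γ T M : ℝ) (α : ℕ)
    (ha : ∀ p, 0 ≤ a p) (hb : ∀ p, 0 ≤ b p) (hN : ∀ p, 0 ≤ N p)
    (hr : ∀ p, r p ∈ Set.Icc (0 : ℝ) 1) (hs : ∀ p, s p ∈ Set.Icc (0 : ℝ) 1)
    (happrox : ∀ p, (1 - η) ^ α * a p ≤ N p ∧ N p ≤ (1 + η) ^ α * a p)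
    (hclose : ∀ p, |r p - s p| < γ)
    (hbr : ∀ p, a p * r p = b p)
    (hT : ∑ p, b p = T)
    (hM : ∑ p, a p ≤ M * T)
    (hγ : 0 ≤ γ) (hη0 : 0 ≤ η) (hη1 : η ≤ 1) (hγM : γ * M ≤ η) :
    (1 - η) ^ (α + 1) * T ≤ ∑ p, N p * s p ∧
      ∑ p, N p * s p ≤ (1 + η) ^ (α + 1) * T := by
  have hT0 : 0 ≤ T := hT ▸ Finset.sum_nonneg fun p _ => hb p
  have h1η : (0:ℝ) ≤ 1 - η := by linarith
  have h1η' : (0:ℝ) ≤ 1 + η := by linarith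
  have hpow : (0:ℝ) ≤ (1 - η) ^ α := pow_nonneg h1η α
  have hpow' : (0:ℝ) ≤ (1 + η) ^ α := pow_nonneg h1η' α
  have hsa : 0 ≤ ∑ p, a p := Finset.sum_nonneg fun p _ => ha p
  have hγa : γ * ∑ p, a p ≤ γ * (M * T) := by nlinarith
  constructor
  · have key : ∀ p, (1 - η) ^ α * (b p - γ * a p) ≤ N p * s p := by
      intro p
      have h1 : (1 - η) ^ α * a p ≤ N p := (happrox p).1
      have hc := abs_lt.1 (hclose p)
      have hs0 := (hs p).1
      have h2 : b p - γ * a p ≤ a p * s p := by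
        rw [← hbr p]; nlinarith [ha p]
      nlinarith [ha p]
    have hsum : ∑ p, (1 - η) ^ α * (b p - γ * a p)
        = (1 - η) ^ α * (T - γ * ∑ p, a p) := by
      rw [← Finset.mul_sum, Finset.sum_sub_distrib, hT, Finset.mul_sum]
    calc (1 - η) ^ (α + 1) * T
        ≤ (1 - η) ^ α * (T - γ * ∑ p, a p) := by
          rw [pow_succ]
          have h3 : γ * (M * T) ≤ η * T := by nlinarith [mul_le_mul_of_nonneg_right hγM hT0]
          have h4 : (1 - η) * T ≤ T - γ * ∑ p, a p := by linarith
          calc (1 - η) ^ α * (1 - η) * T = (1 - η) ^ α * ((1 - η) * T) := by ring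
            _ ≤ (1 - η) ^ α * (T - γ * ∑ p, a p) := mul_le_mul_of_nonneg_left h4 hpow
      _ = ∑ p, (1 - η) ^ α * (b p - γ * a p) := hsum.symm
      _ ≤ ∑ p, N p * s p := Finset.sum_le_sum fun p _ => key p
  · have key : ∀ p, N p * s p ≤ (1 + η) ^ α * (b p + γ * a p) := by
      intro p
      have h1 : N p ≤ (1 + η) ^ α * a p := (happrox p).2
      have hc := abs_lt.1 (hclose p)
      have hs0 := (hs p).1
      have h2 : a p * s p ≤ b p + γ * a p := by
        rw [← hbr p]; nlinarith [ha p]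
      nlinarith [hN p, ha p]
    have hsum : ∑ p, (1 + η) ^ α * (b p + γ * a p)
        = (1 + η) ^ α * (T + γ * ∑ p, a p) := by
      rw [← Finset.mul_sum, Finset.sum_add_distrib, hT, Finset.mul_sum]
    calc ∑ p, N p * s p
        ≤ ∑ p, (1 + η) ^ α * (b p + γ * a p) :=
          Finset.sum_le_sum fun p _ => key p
      _ = (1 + η) ^ α * (T + γ * ∑ p, a p) := hsum
      _ ≤ (1 + η) ^ (α + 1) * T := by
          rw [pow_succ]
          have h3 : γ * (M * T) ≤ η * T := by nlinarith [mul_le_mul_of_nonneg_right hγM hT0]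
          have h4 : T + γ * ∑ p, a p ≤ (1 + η) * T := by linarith
          calc (1 + η) ^ α * (T + γ * ∑ p, a p) ≤ (1 + η) ^ α * ((1 + η) * T) :=
                mul_le_mul_of_nonneg_left h4 hpow'
            _ = (1 + η) ^ α * (1 + η) * T := by ring
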